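/- In the n-dimensional Morris orientation, suppose the simple principal pivoting algorithm with the least-index rule under a permutation π visits a vertex v with v_{π(i+1)} = … = v_{π(n)} = 1. Then all subsequently visited vertices u also satisfy u_{π(i+1)} = … = u_{π(n)} = 1. -/

import Mathlib

/-- Flip coordinate `i` of a cube vertex. -/
def cflip {n : ℕ} (v : Fin n → Bool) (i : Fin n) : Fin n → Bool :=
  fun j => if j = i then !v j else v j

/-- `Φ v i = true` means the edge between `v` and `v ⊕ i` is incoming at `v` (sign `+`);
`Φ v i = false` means it is outgoing at `v` (sign `-`). Consistency says the two
endpoints of an edge agree about its direction. -/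
def Consistent {n : ℕ} (Φ : (Fin n → Bool) → Fin n → Bool) : Prop :=
  ∀ v i, Φ (cflip v i) i ≠ Φ v i

/-- `w` lies in the subcube spanned from `u` by the coordinate set `C`. -/
def InSubcube {n : ℕ} (u : Fin n → Bool) (C : Finset (Fin n)) (w : Fin n → Bool) : Prop :=
  ∀ j ∉ C, w j = u j

/-- Every (nonempty) subcube has a unique sink. -/
def HasUniqueSinks {n : ℕ} (Φ : (Fin n → Bool) → Fin n → Bool) : Prop :=
  ∀ (u : Fin n → Bool) (C : Finset (Fin n)),
    ∃! w, InSubcube u C w ∧ ∀ i ∈ C, Φ w i = true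

/-- A unique-sink orientation of the `n`-cube. -/
def IsUSO {n : ℕ} (Φ : (Fin n → Bool) → Fin n → Bool) : Prop :=
  Consistent Φ ∧ HasUniqueSinks Φ

/-- Directed edge relation of the orientation: `v → u`. -/
def Step {n : ℕ} (Φ : (Fin n → Bool) → Fin n → Bool) (v u : Fin n → Bool) : Prop :=
  ∃ i, Φ v i = false ∧ u = cflip v i

/-- Length of the run of `1`s at positions `j+1, j+2, …` (cyclically), i.e. the state
of the Morris transducer just before reading `v j` is `T` iff this run length is odd. -/
def morrisRun {n : ℕ} [NeZero n] (v : Fin n → Bool) (j : Fin n) : ℕ :=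
  let K := (Finset.range n).filter (fun k : ℕ => v (j + 1 + (Fin.ofNat n k)) = false)
  if h : K.Nonempty then K.min' h else 0

/-- The Morris orientation of the `n`-cube (`n` odd), given by the two-state transducer:
the all-ones vertex is the global sink; otherwise the edge at `v` in coordinate `j` is
outgoing (`false`) iff `v j` agrees with the parity of the run of ones above `j`. -/
def morris {n : ℕ} [NeZero n] (v : Fin n → Bool) : Fin n → Bool :=
  fun j =>
    if ∀ i, v i = true then true
    else !(v j == decide (Odd (morrisRun v j)))

/-- One step of simple principal pivoting with the least-index rule under the
permutation `π`: among the coordinates with outgoing edges, pivot on `π j` with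
`j` minimal such that `π j` has an outgoing edge. -/
def murtyPiNext {n : ℕ} (Φ : (Fin n → Bool) → Fin n → Bool)
    (π : Equiv.Perm (Fin n)) (v : Fin n → Bool) : Fin n → Bool :=
  let O := Finset.univ.filter (fun j => Φ v (π j) = false)
  if h : O.Nonempty then cflip v (π (O.min' h)) else v

section Aux
variable {n : ℕ} [NeZero n]
open Fin.NatCast Fin.CommRing

lemma morrisRun_spec (v : Fin n → Bool) (q : Fin n) (p : Fin n) (hp : v p = false) :
    morrisRun v q < n ∧ v (q + 1 + ((morrisRun v q : ℕ) : Fin n)) = false ∧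
      ∀ k < morrisRun v q, v (q + 1 + (k : Fin n)) = true := by
  classical
  have hmem : (p - (q+1)).val ∈
      (Finset.range n).filter (fun k : ℕ => v (q + 1 + (k : Fin n)) = false) := by
    rw [Finset.mem_filter, Finset.mem_range]
    refine ⟨(p - (q+1)).isLt, ?_⟩
    rw [Fin.cast_val_eq_self]
    have : q + 1 + (p - (q + 1)) = p := by ring
    rw [this]; exact hp
  have hKne : ((Finset.range n).filter
      (fun k : ℕ => v (q + 1 + (k : Fin n)) = false)).Nonempty := ⟨_, hmem⟩
  have hrun : morrisRun v q = ((Finset.range n).filter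
      (fun k : ℕ => v (q + 1 + (k : Fin n)) = false)).min' hKne := by
    rw [morrisRun]; exact dif_pos hKne
  have hmin := Finset.min'_mem _ hKne
  rw [Finset.mem_filter, Finset.mem_range] at hmin
  refine ⟨by rw [hrun]; exact hmin.1, by rw [hrun]; exact hmin.2, ?_⟩
  intro k hk
  by_contra hfalse
  have hkK : k ∈ (Finset.range n).filter
      (fun k : ℕ => v (q + 1 + (k : Fin n)) = false) := by
    rw [Finset.mem_filter, Finset.mem_range]
    exact ⟨lt_trans (hrun ▸ hk) hmin.1, by simpa using hfalse⟩
  have := Finset.min'_le _ k hkK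
  rw [← hrun] at this
  omega

lemma morrisRun_eq_zero (v : Fin n → Bool) (q : Fin n) (h1 : v (q + 1) = false) :
    morrisRun v q = 0 := by
  obtain ⟨_, _, hall⟩ := morrisRun_spec v q (q+1) h1
  by_contra h0
  have := hall 0 (Nat.pos_of_ne_zero h0)
  simp at this
  rw [this] at h1
  simp at h1

lemma morrisRun_succ (v : Fin n → Bool) (q : Fin n) (p : Fin n) (hp : v p = false)
    (h1 : v (q + 1) = true) : morrisRun v q = morrisRun v (q + 1) + 1 := by
  obtain ⟨hrlt, hrfalse, hrall⟩ := morrisRun_spec v q p hp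
  obtain ⟨hmlt, hmfalse, hmall⟩ := morrisRun_spec v (q+1) p hp
  set r := morrisRun v q with hr
  set m := morrisRun v (q+1) with hm
  have hrpos : r ≠ 0 := by
    intro h0
    rw [h0] at hrfalse
    simp at hrfalse
    rw [hrfalse] at h1
    simp at h1
  have hmn : m + 1 < n := by
    rcases Nat.lt_or_ge (m+1) n with h | h
    · exact h
    · exfalso
      have hmeq : m = n - 1 := by omega
      have : ((m : ℕ) : Fin n) = -1 := by
        rw [hmeq]
        have hn1 : 1 ≤ n := Nat.one_le_iff_ne_zero.mpr (NeZero.ne n)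
        have : ((n - 1 : ℕ) : Fin n) = (n : Fin n) - 1 := by
          push_cast [Nat.cast_sub hn1]
          ring
        rw [this]
        simp
      rw [this] at hmfalse
      have : q + 1 + 1 + (-1 : Fin n) = q + 1 := by ring
      rw [this] at hmfalse
      rw [hmfalse] at h1
      simp at h1
  -- m + 1 ≤ r
  have h1' : m + 1 ≤ r := by
    by_contra hcon
    push_neg at hcon
    -- r ≤ m, r ≥ 1, so r - 1 < m, v(q+1+1+(r-1)) = true, but v(q+1+r) = false
    have hr1 : r - 1 < m := by omega
    have := hmall (r-1) hr1
    have hcast : q + 1 + 1 + ((r - 1 : ℕ) : Fin n) = q + 1 + ((r : ℕ) : Fin n) := by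
      have : (r : ℕ) =  (r - 1) + 1 := by omega
      rw [this]
      push_cast
      ring
    rw [hcast] at this
    rw [this] at hrfalse
    simp at hrfalse
  -- r ≤ m + 1
  have h2' : r ≤ m + 1 := by
    by_contra hcon
    push_neg at hcon
    have := hrall (m+1) hcon
    have hcast : q + 1 + ((m + 1 : ℕ) : Fin n) = q + 1 + 1 + ((m : ℕ) : Fin n) := by
      push_cast
      ring
    rw [hcast] at this
    rw [this] at hmfalse
    simp at hmfalse
  omega

lemma morris_exists_even_false (hn : Odd n) (v : Fin n → Bool)
    (hne : ∃ p, v p = false) :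
    ∃ j, v j = false ∧ Even (morrisRun v j) := by
  classical
  by_contra hcon
  push_neg at hcon
  obtain ⟨p, hp⟩ := hne
  -- every false coordinate has odd run
  have hodd : ∀ j, v j = false → Odd (morrisRun v j) := by
    intro j hj
    rcases Nat.even_or_odd (morrisRun v j) with h | h
    · exact absurd h (by simpa using hcon j hj)
    · exact h
  set F : Fin n → ZMod 2 := fun q => (morrisRun v q : ZMod 2) with hF
  have hterm : ∀ q : Fin n, F q + F (q + 1) = 1 := by
    intro q
    rcases (Bool.eq_false_or_eq_true (v (q+1))).symm with h | h
    · -- run q = 0, run (q+1) odd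
      have h0 := morrisRun_eq_zero v q h
      obtain ⟨k, hk⟩ := hodd (q+1) h
      rw [hF]
      simp only [h0, hk]
      push_cast
      have : (2 : ZMod 2) = 0 := by decide
      rw [this]
      ring
    · have hsucc := morrisRun_succ v q p hp h
      rw [hF]
      simp only [hsucc]
      push_cast
      have : (2 : ZMod 2) = 0 := by decide
      calc ((morrisRun v (q+1) : ZMod 2) + 1) + (morrisRun v (q+1) : ZMod 2)
          = 2 * (morrisRun v (q+1) : ZMod 2) + 1 := by ring
        _ = 1 := by rw [this]; ring
  have hsum1 : ∑ q : Fin n, F (q + 1) = ∑ q : Fin n, F q :=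
    Fintype.sum_equiv (Equiv.addRight (1 : Fin n)) _ _ (fun q => rfl)
  have hsum : ∑ q : Fin n, (F q + F (q + 1)) = 0 := by
    rw [Finset.sum_add_distrib, hsum1]
    have : ∑ q : Fin n, F q + ∑ q : Fin n, F q = 2 * ∑ q : Fin n, F q := by ring
    rw [this]
    have h2 : (2 : ZMod 2) = 0 := by decide
    rw [h2]; ring
  rw [Finset.sum_congr rfl (fun q _ => hterm q)] at hsum
  rw [Finset.sum_const, Finset.card_univ, Fintype.card_fin] at hsum
  obtain ⟨k, hk⟩ := hn
  rw [hk] at hsum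
  simp at hsum
  have h2 : (2 : ZMod 2) = 0 := by decide
  rw [h2] at hsum
  simp at hsum

end Aux

section Main
variable {n : ℕ} [NeZero n]

lemma murtyPiNext_preserves (hn : Odd n) (π : Equiv.Perm (Fin n)) (i : ℕ)
    (v : Fin n → Bool) (hv : ∀ j : Fin n, i ≤ j.val → v (π j) = true) :
    ∀ j : Fin n, i ≤ j.val → (murtyPiNext morris π v) (π j) = true := by
  classical
  intro j hj
  by_cases hall : ∀ p, v p = true
  · -- all ones: every edge incoming, O empty, stay put
    have hO : ¬ (Finset.univ.filter (fun j => morris v (π j) = false)).Nonempty := by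
      simp only [Finset.filter_nonempty_iff, Finset.mem_univ, true_and, not_exists]
      intro a
      rw [morris, if_pos hall]
      simp
    rw [murtyPiNext]
    simp only [dif_neg hO]
    exact hv j hj
  · push_neg at hall
    obtain ⟨p, hp⟩ := hall
    have hpf : v p = false := by simpa using hp
    obtain ⟨j0, hj0f, hj0e⟩ := morris_exists_even_false hn v ⟨p, hpf⟩
    have hmj0 : morris v j0 = false := by
      rw [morris, if_neg (by push_neg; exact ⟨j0, by simp [hj0f]⟩)]
      rw [hj0f]
      simp [Nat.not_odd_iff_even.mpr hj0e]
    set O := Finset.univ.filter (fun j => morris v (π j) = false) with hO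
    have hj1 : π.symm j0 ∈ O := by
      rw [hO, Finset.mem_filter]
      simp [hmj0]
    have hOne : O.Nonempty := ⟨_, hj1⟩
    have hj1lt : (π.symm j0).val < i := by
      by_contra hge
      push_neg at hge
      have := hv (π.symm j0) hge
      rw [Equiv.apply_symm_apply] at this
      simp [hj0f] at this
    have hminlt : (O.min' hOne).val < i := by
      have h1 : (O.min' hOne) ≤ π.symm j0 := Finset.min'_le O _ hj1
      have h2 := Fin.le_def.mp h1
      omega
    have hstep : murtyPiNext morris π v = cflip v (π (O.min' hOne)) := by
      rw [murtyPiNext]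
      exact dif_pos hOne
    rw [hstep, cflip]
    have hne : π j ≠ π (O.min' hOne) := by
      intro heq
      have := π.injective heq
      rw [this] at hj
      omega
    rw [if_neg hne]
    exact hv j hj

end Main

/-- in the Morris orientation (`n` odd), once the least-index
algorithm under `π` visits a vertex `v` with `v (π j) = 1` for all `j ≥ i`,
every subsequently visited vertex `u` satisfies `u (π j) = 1` for all `j ≥ i`. -/
theorem morris_murtyPi_ones_stay {n : ℕ} [NeZero n] (hn : Odd n)
    (π : Equiv.Perm (Fin n)) (i : ℕ) (v : Fin n → Bool)
    (hv : ∀ j : Fin n, i ≤ j.val → v (π j) = true) :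
    ∀ N : ℕ, ∀ j : Fin n, i ≤ j.val →
      ((murtyPiNext (morris) π)^[N] v) (π j) = true := by
  intro N
  induction N with
  | zero => simpa using hv
  | succ N ih =>
    intro j hj
    rw [Function.iterate_succ_apply']
    exact murtyPiNext_preserves hn π i _ ih j hj
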